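/- Let n and m be positive integers, let A be an n×n matrix with entries in {−1, 1}, and let B be an m×m matrix with entries in {−1, 1}. Then there exists an nm×nm matrix C with entries in {−1, 1} (namely, the Kronecker product A ⊗ B) such that ‖C‖_S = ‖A‖_S · ‖B‖_S. In other words, σ_n σ_m ⊆ σ_{nm}. -/

import Mathlib

open scoped ComplexOrder

/-- The operator norm (induced by Euclidean norms) of a complex matrix. -/
noncomputable def Matrix.copNorm {m n : Type*} [Fintype m] [Fintype n] [DecidableEq n]
    (M : Matrix m n ℂ) : ℝ :=
  ‖LinearMap.toContinuousLinearMap (Matrix.toEuclideanLin M)‖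

/-- The operator norm (induced by Euclidean norms) of a real matrix. -/
noncomputable def Matrix.ropNorm {m n : Type*} [Fintype m] [Fintype n] [DecidableEq n]
    (M : Matrix m n ℝ) : ℝ :=
  ‖LinearMap.toContinuousLinearMap (Matrix.toEuclideanLin M)‖

/-- The Schur norm of a complex square matrix: the supremum of `‖M ∘ C‖` over all
complex contractions `C`, where `∘` is the entrywise (Schur/Hadamard) product. -/
noncomputable def Matrix.schurNorm {n : Type*} [Fintype n] [DecidableEq n]
    (M : Matrix n n ℂ) : ℝ :=
  sSup {x | ∃ C : Matrix n n ℂ, Matrix.copNorm C ≤ 1 ∧ x = Matrix.copNorm (Matrix.hadamard M C)}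

/-- `rSchur n`: the supremum of Schur norms of `n × n` real matrices whose entries all have
absolute value at most `1`. -/
noncomputable def rSchur (n : ℕ) : ℝ :=
  sSup {x | ∃ M : Matrix (Fin n) (Fin n) ℝ, (∀ i j, |M i j| ≤ 1) ∧
    x = Matrix.schurNorm (M.map Complex.ofReal)}

namespace SchurAux
open Matrix
open scoped Matrix.Norms.L2Operator Kronecker ComplexConjugate
set_option linter.unusedSectionVars false

variable {ι κ ι' κ' : Type*} [Fintype ι] [DecidableEq ι] [Fintype κ] [DecidableEq κ]
  [Fintype ι'] [DecidableEq ι'] [Fintype κ'] [DecidableEq κ']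

lemma copNorm_eq (M : Matrix ι κ ℂ) : M.copNorm = ‖M‖ := rfl

noncomputable def N2 {ι : Type*} [Fintype ι] (x : ι → ℂ) : ℝ := Real.sqrt (∑ i, ‖x i‖^2)

lemma N2_nonneg (x : ι → ℂ) : 0 ≤ N2 x := Real.sqrt_nonneg _

lemma N2_sq (x : ι → ℂ) : N2 x ^ 2 = ∑ i, ‖x i‖^2 :=
  Real.sq_sqrt (by positivity)

lemma N2_eq_of_sq_eq {x : ι → ℂ} {y : κ → ℂ} (h : ∑ i, ‖x i‖^2 = ∑ j, ‖y j‖^2) :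
    N2 x = N2 y := by rw [N2, N2, h]

lemma eq_zero_of_N2 {x : ι → ℂ} (h : N2 x = 0) (i : ι) : x i = 0 := by
  have h2 : ∑ i, ‖x i‖^2 = 0 := by
    have := congrArg (· ^ 2) h
    simpa [N2_sq] using this
  have := (Finset.sum_eq_zero_iff_of_nonneg (fun i _ => by positivity)).mp h2 i (Finset.mem_univ i)
  simpa using this

lemma norm_eu (x : EuclideanSpace ℂ ι) : ‖x‖ = N2 (fun i => x i) := by
  rw [EuclideanSpace.norm_eq]; rfl

lemma euclidean_apply (M : Matrix ι κ ℂ) (x : EuclideanSpace ℂ κ) :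
    ‖LinearMap.toContinuousLinearMap (Matrix.toEuclideanLin M) x‖ = N2 (M *ᵥ fun i => x i) := by
  rw [LinearMap.coe_toContinuousLinearMap', Matrix.toEuclideanLin_apply, norm_eu]

lemma mulVec_N2_le (M : Matrix ι κ ℂ) (x : κ → ℂ) : N2 (M *ᵥ x) ≤ ‖M‖ * N2 x := by
  have h := Matrix.l2_opNorm_mulVec M ((WithLp.equiv 2 (κ → ℂ)).symm x)
  rw [EuclideanSpace.norm_eq, EuclideanSpace.norm_eq] at h
  simpa [N2] using h

lemma opNorm_le_of (M : Matrix ι κ ℂ) {c : ℝ} (hc : 0 ≤ c)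
    (h : ∀ x : κ → ℂ, N2 (M *ᵥ x) ≤ c * N2 x) : ‖M‖ ≤ c := by
  rw [Matrix.l2_opNorm_def]
  refine ContinuousLinearMap.opNorm_le_bound _ hc fun x => ?_
  have h1 : ‖(Matrix.toEuclideanLin.trans LinearMap.toContinuousLinearMap M) x‖
      = N2 (M *ᵥ fun i => x i) := euclidean_apply M x
  rw [h1, norm_eu]
  exact h _

lemma inner_sum_le (y z : ι → ℂ) : ‖∑ i, conj (y i) * z i‖ ≤ N2 y * N2 z := by
  set Y : EuclideanSpace ℂ ι := (WithLp.equiv 2 (ι → ℂ)).symm y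
  set Z : EuclideanSpace ℂ ι := (WithLp.equiv 2 (ι → ℂ)).symm z
  have h1 : (inner ℂ Y Z : ℂ) = ∑ i, conj (y i) * z i := by
    simp [PiLp.inner_apply, RCLike.inner_apply, Y, Z, mul_comm]
  have h2 := norm_inner_le_norm (𝕜 := ℂ) Y Z
  rw [h1] at h2
  rw [norm_eu, norm_eu] at h2
  simpa [N2, Y, Z] using h2

lemma inner_mulVec_le (M : Matrix ι κ ℂ) (y : ι → ℂ) (x : κ → ℂ) :
    ‖∑ i, conj (y i) * (M *ᵥ x) i‖ ≤ ‖M‖ * N2 y * N2 x := by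
  calc ‖∑ i, conj (y i) * (M *ᵥ x) i‖ ≤ N2 y * N2 (M *ᵥ x) := inner_sum_le _ _
    _ ≤ N2 y * (‖M‖ * N2 x) := by
        exact mul_le_mul_of_nonneg_left (mulVec_N2_le M x) (N2_nonneg y)
    _ = ‖M‖ * N2 y * N2 x := by ring

lemma self_inner (w : ι → ℂ) : ‖∑ i, conj (w i) * w i‖ = N2 w ^ 2 := by
  have h : ∑ i, conj (w i) * w i = ((∑ i, ‖w i‖^2 : ℝ) : ℂ) := by
    push_cast
    refine Finset.sum_congr rfl fun i _ => ?_
    rw [mul_comm, Complex.mul_conj']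
  rw [h, N2_sq, Complex.norm_real]
  exact Real.norm_of_nonneg (by positivity)

lemma N2_le_of_inner (w : ι → ℂ) {c : ℝ} (hc : 0 ≤ c)
    (h : ‖∑ i, conj (w i) * w i‖ ≤ c * N2 w) : N2 w ≤ c := by
  rw [self_inner] at h
  rcases eq_or_lt_of_le (N2_nonneg w) with h0 | h0
  · rw [← h0]; exact hc
  · nlinarith [N2_sq w]

lemma sqrt_le_helper {a b : ℝ} (hb : 0 ≤ b) (h : a ≤ b ^ 2) : Real.sqrt a ≤ b := by
  calc Real.sqrt a ≤ Real.sqrt (b ^ 2) := Real.sqrt_le_sqrt h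
    _ = b := by rw [Real.sqrt_sq hb]

lemma N2_le_of_sq_le {x : ι → ℂ} {b : ℝ} (hb : 0 ≤ b) (h : ∑ i, ‖x i‖^2 ≤ b ^ 2) :
    N2 x ≤ b := sqrt_le_helper hb h

lemma entry_le_norm (M : Matrix ι κ ℂ) (i : ι) (j : κ) : ‖M i j‖ ≤ ‖M‖ := by
  have h := mulVec_N2_le M (Pi.single j 1)
  have h1 : N2 (Pi.single j (1:ℂ)) = 1 := by
    have h0 : ∑ k, ‖Pi.single (M := fun _ : κ => ℂ) j 1 k‖^2 = 1 := by
      have : ∀ k, ‖Pi.single (M := fun _ : κ => ℂ) j 1 k‖^2 = if k = j then 1 else 0 := by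
        intro k
        rcases eq_or_ne k j with h | h
        · subst h; simp
        · simp [h, Pi.single_eq_of_ne h]
      rw [Finset.sum_congr rfl fun k _ => this k]
      simp
    rw [N2, h0, Real.sqrt_one]
  have h2 : ‖M i j‖ ≤ N2 (M *ᵥ Pi.single j 1) := by
    have hm : M *ᵥ Pi.single j 1 = fun i => M i j := by
      ext i; simp [Matrix.mulVec_single]
    rw [N2, hm]
    refine Real.le_sqrt_of_sq_le ?_
    exact Finset.single_le_sum (f := fun i => ‖M i j‖^2) (fun k _ => by positivity)
      (Finset.mem_univ i)
  rw [h1, mul_one] at h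
  exact h2.trans h

lemma frobenius_bound (M : Matrix ι κ ℂ) : ‖M‖ ≤ Real.sqrt (∑ i, ∑ j, ‖M i j‖^2) := by
  refine opNorm_le_of M (Real.sqrt_nonneg _) fun x => ?_
  refine N2_le_of_sq_le (mul_nonneg (Real.sqrt_nonneg _) (N2_nonneg _)) ?_
  have hs := Real.sq_sqrt (show (0:ℝ) ≤ ∑ i, ∑ j, ‖M i j‖^2 by positivity)
  rw [mul_pow, hs, N2_sq, Finset.sum_mul]
  refine Finset.sum_le_sum fun i _ => ?_
  have hcs : ‖(M *ᵥ x) i‖ ≤ ∑ j, ‖M i j‖ * ‖x j‖ := by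
    refine (norm_sum_le _ _).trans ?_
    exact Finset.sum_le_sum fun j _ => by rw [norm_mul]
  have hcs2 : (∑ j, ‖M i j‖ * ‖x j‖)^2 ≤ (∑ j, ‖M i j‖^2) * ∑ j, ‖x j‖^2 :=
    Finset.sum_mul_sq_le_sq_mul_sq Finset.univ _ _
  calc ‖(M *ᵥ x) i‖^2 ≤ (∑ j, ‖M i j‖ * ‖x j‖)^2 := by
        exact pow_le_pow_left₀ (norm_nonneg _) hcs 2
    _ ≤ _ := hcs2

lemma N2_comp_equiv (x : ι → ℂ) (e : κ ≃ ι) : N2 (fun k => x (e k)) = N2 x := by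
  refine N2_eq_of_sq_eq ?_
  exact Fintype.sum_equiv e _ _ fun k => rfl

lemma opNorm_submatrix_le (M : Matrix ι κ ℂ) (e : ι' ≃ ι) (f : κ' ≃ κ) :
    ‖M.submatrix ⇑e ⇑f‖ ≤ ‖M‖ := by
  refine opNorm_le_of _ (norm_nonneg M) fun x => ?_
  rw [Matrix.submatrix_mulVec_equiv]
  have h1 : N2 ((M *ᵥ (x ∘ ⇑f.symm)) ∘ ⇑e) = N2 (M *ᵥ (x ∘ ⇑f.symm)) :=
    N2_comp_equiv _ e
  have h2 : N2 (x ∘ ⇑f.symm) = N2 x := N2_comp_equiv _ f.symm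
  calc N2 ((M *ᵥ (x ∘ ⇑f.symm)) ∘ ⇑e) = N2 (M *ᵥ (x ∘ ⇑f.symm)) := h1
    _ ≤ ‖M‖ * N2 (x ∘ ⇑f.symm) := mulVec_N2_le M _
    _ = ‖M‖ * N2 x := by rw [h2]

lemma opNorm_submatrix (M : Matrix ι κ ℂ) (e : ι' ≃ ι) (f : κ' ≃ κ) :
    ‖M.submatrix ⇑e ⇑f‖ = ‖M‖ := by
  refine le_antisymm (opNorm_submatrix_le M e f) ?_
  have h := opNorm_submatrix_le (M.submatrix ⇑e ⇑f) e.symm f.symm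
  have h2 : (M.submatrix ⇑e ⇑f).submatrix ⇑e.symm ⇑f.symm = M := by
    ext i j; simp [Matrix.submatrix_apply]
  rwa [h2] at h
lemma exists_attained (M : Matrix ι κ ℂ) [Nonempty κ] :
    ∃ x : κ → ℂ, N2 x = 1 ∧ N2 (M *ᵥ x) = ‖M‖ := by
  set T := LinearMap.toContinuousLinearMap (Matrix.toEuclideanLin M) with hT
  have hc : IsCompact (Metric.sphere (0 : EuclideanSpace ℂ κ) 1) := isCompact_sphere _ _
  have hne : (Metric.sphere (0 : EuclideanSpace ℂ κ) 1).Nonempty :=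
    NormedSpace.sphere_nonempty.mpr zero_le_one
  obtain ⟨x, hx, hmax'⟩ := hc.exists_isMaxOn hne
    (f := fun y => ‖T y‖) ((continuous_norm.comp T.continuous).continuousOn)
  have hmax : ∀ y ∈ Metric.sphere (0 : EuclideanSpace ℂ κ) 1, ‖T y‖ ≤ ‖T x‖ :=
    fun y hy => hmax' hy
  have hx1 : ‖x‖ = 1 := by simpa using hx
  have hTbound : ∀ y : EuclideanSpace ℂ κ, ‖T y‖ ≤ ‖T x‖ * ‖y‖ := by
    intro y
    rcases eq_or_ne y 0 with rfl | hy
    · simp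
    · have hyn : ‖y‖ ≠ 0 := norm_ne_zero_iff.mpr hy
      set c : ℂ := ((‖y‖⁻¹ : ℝ) : ℂ) with hc1
      have hcnorm : ‖c‖ = ‖y‖⁻¹ := by
        rw [hc1, Complex.norm_real, Real.norm_eq_abs,
          abs_of_nonneg (inv_nonneg.mpr (norm_nonneg y))]
      have hmem : c • y ∈ Metric.sphere (0 : EuclideanSpace ℂ κ) 1 := by
        rw [mem_sphere_zero_iff_norm, norm_smul, hcnorm, inv_mul_cancel₀ hyn]
      have hle := hmax _ hmem
      rw [_root_.map_smul, norm_smul, hcnorm] at hle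
      have h3 : ‖T y‖ = ‖y‖ * (‖y‖⁻¹ * ‖T y‖) := by field_simp
      rw [h3, mul_comm (‖T x‖)]
      exact mul_le_mul_of_nonneg_left hle (norm_nonneg y)
  have hnorm : ‖M‖ = ‖T x‖ := by
    refine le_antisymm ?_ ?_
    · rw [Matrix.l2_opNorm_def]
      exact ContinuousLinearMap.opNorm_le_bound _ (norm_nonneg _) hTbound
    · have := T.le_opNorm x
      rw [hx1, mul_one] at this
      exact this
  refine ⟨fun i => x i, ?_, ?_⟩
  · rw [← norm_eu, hx1]
  · rw [← euclidean_apply M x, ← hnorm]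

lemma N2_prod (x : ι → ℂ) (y : κ → ℂ) :
    N2 (fun p : ι × κ => x p.1 * y p.2) = N2 x * N2 y := by
  rw [N2, N2, N2, ← Real.sqrt_mul (by positivity)]
  congr 1
  rw [Fintype.sum_prod_type, Finset.sum_mul_sum]
  refine Finset.sum_congr rfl fun i _ => Finset.sum_congr rfl fun k _ => ?_
  rw [norm_mul, mul_pow]

lemma kron_mulVec (A : Matrix ι ι' ℂ) (B : Matrix κ κ' ℂ) (x : ι' → ℂ) (y : κ' → ℂ) :
    (A ⊗ₖ B) *ᵥ (fun p => x p.1 * y p.2) = fun p => (A *ᵥ x) p.1 * (B *ᵥ y) p.2 := by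
  ext p
  rw [Matrix.mulVec, dotProduct, Fintype.sum_prod_type]
  rw [Matrix.mulVec, Matrix.mulVec, dotProduct, dotProduct, Finset.sum_mul_sum]
  refine Finset.sum_congr rfl fun j _ => Finset.sum_congr rfl fun l _ => ?_
  simp [Matrix.kroneckerMap_apply]
  ring

lemma one_kron_le (B : Matrix κ κ ℂ) : ‖(1 : Matrix ι ι ℂ) ⊗ₖ B‖ ≤ ‖B‖ := by
  refine opNorm_le_of _ (norm_nonneg B) fun x => ?_
  have hv : (((1 : Matrix ι ι ℂ) ⊗ₖ B) *ᵥ x) = fun p => (B *ᵥ fun l => x (p.1, l)) p.2 := by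
    ext ⟨i, k⟩
    show ∑ q, ((1 : Matrix ι ι ℂ) ⊗ₖ B) (i,k) q * x q = (B *ᵥ fun l => x (i,l)) k
    rw [Fintype.sum_prod_type]
    refine (Finset.sum_eq_single i (fun j _ hj => ?_) (fun h => absurd (Finset.mem_univ i) h)).trans ?_
    · refine Finset.sum_eq_zero fun l _ => ?_
      rw [Matrix.kroneckerMap_apply, Matrix.one_apply_ne (Ne.symm hj), zero_mul, zero_mul]
    · rw [Matrix.mulVec, dotProduct]
      refine Finset.sum_congr rfl fun l _ => ?_
      rw [Matrix.kroneckerMap_apply, Matrix.one_apply_eq, one_mul]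
  rw [hv]
  refine N2_le_of_sq_le (mul_nonneg (norm_nonneg B) (N2_nonneg x)) ?_
  rw [Fintype.sum_prod_type, mul_pow, N2_sq, Fintype.sum_prod_type, Finset.mul_sum]
  refine Finset.sum_le_sum fun i _ => ?_
  have h1 := mulVec_N2_le B (fun l => x (i,l))
  have h2 := pow_le_pow_left₀ (N2_nonneg _) h1 2
  rw [N2_sq, mul_pow, N2_sq] at h2
  exact h2

lemma kron_one_eq (A : Matrix ι ι ℂ) :
    A ⊗ₖ (1 : Matrix κ κ ℂ)
      = ((1 : Matrix κ κ ℂ) ⊗ₖ A).submatrix ⇑(Equiv.prodComm ι κ) ⇑(Equiv.prodComm ι κ) := by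
  ext ⟨i, k⟩ ⟨j, l⟩
  rw [Matrix.kroneckerMap_apply, Matrix.submatrix_apply]
  show A i j * (1 : Matrix κ κ ℂ) k l = (1 : Matrix κ κ ℂ) k l * A i j
  ring

lemma kron_one_le (A : Matrix ι ι ℂ) : ‖A ⊗ₖ (1 : Matrix κ κ ℂ)‖ ≤ ‖A‖ := by
  rw [kron_one_eq, opNorm_submatrix]
  exact one_kron_le A

lemma kron_norm_le (A : Matrix ι ι ℂ) (B : Matrix κ κ ℂ) : ‖A ⊗ₖ B‖ ≤ ‖A‖ * ‖B‖ := by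
  have hfact : A ⊗ₖ B = (A ⊗ₖ (1 : Matrix κ κ ℂ)) * ((1 : Matrix ι ι ℂ) ⊗ₖ B) := by
    rw [← Matrix.mul_kronecker_mul, Matrix.mul_one, Matrix.one_mul]
  rw [hfact]
  calc ‖(A ⊗ₖ (1 : Matrix κ κ ℂ)) * ((1 : Matrix ι ι ℂ) ⊗ₖ B)‖
      ≤ ‖A ⊗ₖ (1 : Matrix κ κ ℂ)‖ * ‖(1 : Matrix ι ι ℂ) ⊗ₖ B‖ := Matrix.l2_opNorm_mul _ _
    _ ≤ ‖A‖ * ‖B‖ := mul_le_mul (kron_one_le A) (one_kron_le B) (norm_nonneg _) (norm_nonneg _)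

lemma kron_norm_eq [Nonempty ι] [Nonempty κ] (A : Matrix ι ι ℂ) (B : Matrix κ κ ℂ) :
    ‖A ⊗ₖ B‖ = ‖A‖ * ‖B‖ := by
  refine le_antisymm (kron_norm_le A B) ?_
  obtain ⟨x, hx1, hx2⟩ := exists_attained A
  obtain ⟨y, hy1, hy2⟩ := exists_attained B
  have h := mulVec_N2_le (A ⊗ₖ B) (fun p => x p.1 * y p.2)
  rw [kron_mulVec, N2_prod, N2_prod, hx1, hy1, hx2, hy2, mul_one, mul_one] at h
  exact h

lemma hadamard_submatrix {α α' β β' : Type*} (X Y : Matrix α β ℂ) (f : α' → α) (g : β' → β) :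
    (X.submatrix f g) ⊙ (Y.submatrix f g) = (X ⊙ Y).submatrix f g := by
  ext i j
  simp [Matrix.hadamard_apply]

lemma schurSet_bddAbove (M : Matrix ι ι ℂ) :
    BddAbove {x | ∃ C : Matrix ι ι ℂ, Matrix.copNorm C ≤ 1 ∧ x = Matrix.copNorm (M ⊙ C)} := by
  refine ⟨Real.sqrt (∑ i, ∑ j, ‖M i j‖^2), fun x hx => ?_⟩
  obtain ⟨C, hC, rfl⟩ := hx
  rw [copNorm_eq] at hC ⊢
  refine (frobenius_bound _).trans (Real.sqrt_le_sqrt ?_)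
  refine Finset.sum_le_sum fun i _ => Finset.sum_le_sum fun j _ => ?_
  have hle : ‖(M ⊙ C) i j‖ ≤ ‖M i j‖ := by
    rw [Matrix.hadamard_apply, norm_mul]
    have hCij : ‖C i j‖ ≤ 1 := (entry_le_norm C i j).trans hC
    calc ‖M i j‖ * ‖C i j‖ ≤ ‖M i j‖ * 1 :=
          mul_le_mul_of_nonneg_left hCij (norm_nonneg _)
      _ = ‖M i j‖ := mul_one _
  exact pow_le_pow_left₀ (norm_nonneg _) hle 2

lemma le_schurNorm (M : Matrix ι ι ℂ) (C : Matrix ι ι ℂ) (hC : ‖C‖ ≤ 1) :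
    ‖M ⊙ C‖ ≤ M.schurNorm :=
  le_csSup (schurSet_bddAbove M) ⟨C, hC, rfl⟩

lemma schurNorm_nonneg (M : Matrix ι ι ℂ) : 0 ≤ M.schurNorm := by
  have h := le_schurNorm M 0 (by rw [norm_zero]; exact zero_le_one)
  exact (norm_nonneg _).trans h

lemma schurNorm_le (M : Matrix ι ι ℂ) {K : ℝ} (hK : 0 ≤ K)
    (h : ∀ C : Matrix ι ι ℂ, ‖C‖ ≤ 1 → ‖M ⊙ C‖ ≤ K) : M.schurNorm ≤ K := by
  refine Real.sSup_le ?_ hK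
  rintro x ⟨C, hC, rfl⟩
  exact h C hC

lemma hadamard_norm_le (M C : Matrix ι ι ℂ) : ‖M ⊙ C‖ ≤ M.schurNorm * ‖C‖ := by
  rcases eq_or_ne (‖C‖) 0 with h0 | h0
  · have : C = 0 := norm_eq_zero.mp h0
    subst this
    rw [Matrix.hadamard_zero, norm_zero]
    exact mul_nonneg (schurNorm_nonneg M) le_rfl
  · set c : ℝ := ‖C‖ with hc
    have hcpos : 0 < c := lt_of_le_of_ne (norm_nonneg C) (Ne.symm h0)
    set z : ℂ := ((c⁻¹ : ℝ) : ℂ) with hz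
    have hznorm : ‖z‖ = c⁻¹ := by
      rw [hz, Complex.norm_real, Real.norm_eq_abs, abs_of_nonneg (inv_nonneg.mpr hcpos.le)]
    have h1 : ‖z • C‖ ≤ 1 := by
      rw [norm_smul, hznorm, ← hc, inv_mul_cancel₀ h0]
    have h2 := le_schurNorm M (z • C) h1
    rw [Matrix.hadamard_smul, norm_smul, hznorm] at h2
    calc ‖M ⊙ C‖ = c * (c⁻¹ * ‖M ⊙ C‖) := by field_simp
      _ ≤ c * M.schurNorm := mul_le_mul_of_nonneg_left h2 hcpos.le
      _ = M.schurNorm * c := mul_comm _ _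

lemma schurNorm_submatrix (M : Matrix ι ι ℂ) (e : κ ≃ ι) :
    (M.submatrix ⇑e ⇑e).schurNorm = M.schurNorm := by
  unfold Matrix.schurNorm
  congr 1
  ext x
  constructor
  · rintro ⟨C, hC, rfl⟩
    rw [copNorm_eq] at hC
    refine ⟨C.submatrix ⇑e.symm ⇑e.symm, ?_, ?_⟩
    · rw [copNorm_eq, opNorm_submatrix]; exact hC
    · rw [copNorm_eq, copNorm_eq]
      have hM : M ⊙ (C.submatrix ⇑e.symm ⇑e.symm)
          = ((M.submatrix ⇑e ⇑e) ⊙ C).submatrix ⇑e.symm ⇑e.symm := by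
        ext i j
        simp [Matrix.hadamard_apply, Matrix.submatrix_apply]
      rw [hM, opNorm_submatrix]
  · rintro ⟨C, hC, rfl⟩
    rw [copNorm_eq] at hC
    refine ⟨C.submatrix ⇑e ⇑e, ?_, ?_⟩
    · rw [copNorm_eq, opNorm_submatrix]; exact hC
    · rw [copNorm_eq, copNorm_eq, hadamard_submatrix, opNorm_submatrix]

noncomputable def colN {ι κ : Type*} [Fintype ι] (ξ : ι × κ → ℂ) (l : κ) : ℝ :=
  N2 fun j : ι => ξ (j, l)

lemma colN_nonneg (ξ : ι × κ → ℂ) (l : κ) : 0 ≤ colN ξ l := N2_nonneg _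

lemma colN_eq_zero {ξ : ι × κ → ℂ} {l : κ} (h : colN ξ l = 0) (j : ι) : ξ (j, l) = 0 :=
  eq_zero_of_N2 h j

lemma colN_sq (ξ : ι × κ → ℂ) (l : κ) : colN ξ l ^ 2 = ∑ j, ‖ξ (j, l)‖^2 := N2_sq _

lemma sum_sq_prod (f : ι × κ → ℂ) : ∑ p, ‖f p‖^2 = ∑ l, ∑ j, ‖f (j, l)‖^2 := by
  rw [Fintype.sum_prod_type]
  exact Finset.sum_comm

lemma coe_colN_norm (ξ : ι × κ → ℂ) (l : κ) : ‖((colN ξ l : ℝ) : ℂ)‖ = colN ξ l := by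
  rw [Complex.norm_real, Real.norm_eq_abs, abs_of_nonneg (colN_nonneg ξ l)]

lemma N2_colN_coe (ξ : ι × κ → ℂ) : N2 (fun l => ((colN ξ l : ℝ) : ℂ)) = N2 ξ := by
  refine N2_eq_of_sq_eq ?_
  rw [sum_sq_prod ξ]
  refine Finset.sum_congr rfl fun l _ => ?_
  rw [coe_colN_norm, colN_sq]

noncomputable def Smat (C : Matrix (ι × κ) (ι × κ) ℂ) (η ξ : ι × κ → ℂ) (k l : κ) : ℂ :=
  ∑ i, ∑ j, conj (η (i, k)) * C (i, k) (j, l) * ξ (j, l)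

lemma Smat_zero_left {C : Matrix (ι × κ) (ι × κ) ℂ} {η ξ : ι × κ → ℂ} {k l : κ}
    (hv : colN η k = 0) : Smat C η ξ k l = 0 := by
  refine Finset.sum_eq_zero fun i _ => Finset.sum_eq_zero fun j _ => ?_
  rw [colN_eq_zero hv i]
  simp

lemma Smat_zero_right {C : Matrix (ι × κ) (ι × κ) ℂ} {η ξ : ι × κ → ℂ} {k l : κ}
    (hu : colN ξ l = 0) : Smat C η ξ k l = 0 := by
  refine Finset.sum_eq_zero fun i _ => Finset.sum_eq_zero fun j _ => ?_
  rw [colN_eq_zero hu j]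
  simp

noncomputable def cmpr (C : Matrix (ι × κ) (ι × κ) ℂ) (η ξ : ι × κ → ℂ) : Matrix κ κ ℂ :=
  Matrix.of fun k l =>
    if colN η k = 0 ∨ colN ξ l = 0 then 0
    else Smat C η ξ k l / (((colN η k : ℝ) : ℂ) * ((colN ξ l : ℝ) : ℂ))

noncomputable def extV (ξ : ι × κ → ℂ) (a : κ → ℂ) : ι × κ → ℂ := fun p =>
  if colN ξ p.2 = 0 then 0 else a p.2 * ξ p / ((colN ξ p.2 : ℝ) : ℂ)

lemma N2_extV_le (ξ : ι × κ → ℂ) (a : κ → ℂ) : N2 (extV ξ a) ≤ N2 a := by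
  refine N2_le_of_sq_le (N2_nonneg a) ?_
  rw [N2_sq, sum_sq_prod]
  refine Finset.sum_le_sum fun l _ => ?_
  by_cases hl : colN ξ l = 0
  · simp only [extV, hl, if_true]
    simp
  · have hc : ((colN ξ l : ℝ) : ℂ) ≠ 0 := Complex.ofReal_ne_zero.mpr hl
    have hterm : ∀ j : ι, ‖extV ξ a (j, l)‖^2
        = ‖a l‖^2 / (colN ξ l)^2 * ‖ξ (j, l)‖^2 := by
      intro j
      simp only [extV, hl, if_false]
      rw [norm_div, norm_mul, coe_colN_norm]
      rw [div_pow, mul_pow]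
      ring
    rw [Finset.sum_congr rfl fun j _ => hterm j, ← Finset.mul_sum, ← colN_sq]
    rw [div_mul_cancel₀ _ (pow_ne_zero 2 hl)]

lemma cmpr_inner (C : Matrix (ι × κ) (ι × κ) ℂ) (η ξ : ι × κ → ℂ) (a b : κ → ℂ) :
    ∑ k, conj (b k) * ((cmpr C η ξ) *ᵥ a) k
      = ∑ p, conj (extV η b p) * ((C *ᵥ extV ξ a) p) := by
  have key : ∀ k l : κ,
      conj (b k) * (cmpr C η ξ k l * a l)
        = ∑ i, ∑ j, conj (extV η b (i, k)) * (C (i, k) (j, l) * extV ξ a (j, l)) := by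
    intro k l
    by_cases hv : colN η k = 0
    · have hE : ∀ i : ι, extV η b (i, k) = 0 := fun i => by simp [extV, hv]
      have hD : cmpr C η ξ k l = 0 := by simp [cmpr, hv]
      rw [hD]
      simp [hE]
    · by_cases hu : colN ξ l = 0
      · have hF : ∀ j : ι, extV ξ a (j, l) = 0 := fun j => by simp [extV, hu]
        have hD : cmpr C η ξ k l = 0 := by simp [cmpr, hu]
        rw [hD]
        simp [hF]
      · have hvC : ((colN η k : ℝ) : ℂ) ≠ 0 := Complex.ofReal_ne_zero.mpr hv
        have huC : ((colN ξ l : ℝ) : ℂ) ≠ 0 := Complex.ofReal_ne_zero.mpr hu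
        have hterm : ∀ i j : ι,
            conj (extV η b (i, k)) * (C (i, k) (j, l) * extV ξ a (j, l))
              = conj (b k) * a l / (((colN η k : ℝ) : ℂ) * ((colN ξ l : ℝ) : ℂ))
                * (conj (η (i, k)) * C (i, k) (j, l) * ξ (j, l)) := by
          intro i j
          simp only [extV, hv, hu, if_false]
          rw [map_div₀, _root_.map_mul, Complex.conj_ofReal]
          field_simp
        rw [Finset.sum_congr rfl fun i _ => Finset.sum_congr rfl fun j _ => hterm i j]
        rw [Finset.sum_congr rfl fun i (_ : i ∈ Finset.univ) => (Finset.mul_sum _ _ _).symm,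
          ← Finset.mul_sum]
        have hD : cmpr C η ξ k l
            = Smat C η ξ k l / (((colN η k : ℝ) : ℂ) * ((colN ξ l : ℝ) : ℂ)) := by
          simp [cmpr, hv, hu]
        rw [hD, Smat]
        field_simp
  calc ∑ k, conj (b k) * ((cmpr C η ξ) *ᵥ a) k
      = ∑ k, ∑ l, conj (b k) * (cmpr C η ξ k l * a l) := by
        refine Finset.sum_congr rfl fun k _ => ?_
        rw [Matrix.mulVec, dotProduct, Finset.mul_sum]
    _ = ∑ k, ∑ l, ∑ i, ∑ j,
          conj (extV η b (i, k)) * (C (i, k) (j, l) * extV ξ a (j, l)) := by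
        exact Finset.sum_congr rfl fun k _ => Finset.sum_congr rfl fun l _ => key k l
    _ = ∑ k, ∑ i, ∑ l, ∑ j,
          conj (extV η b (i, k)) * (C (i, k) (j, l) * extV ξ a (j, l)) := by
        exact Finset.sum_congr rfl fun k _ => Finset.sum_comm
    _ = ∑ i, ∑ k, ∑ l, ∑ j,
          conj (extV η b (i, k)) * (C (i, k) (j, l) * extV ξ a (j, l)) := Finset.sum_comm
    _ = ∑ p, conj (extV η b p) * ((C *ᵥ extV ξ a) p) := by
        rw [Fintype.sum_prod_type]
        refine Finset.sum_congr rfl fun i _ => Finset.sum_congr rfl fun k _ => ?_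
        rw [Matrix.mulVec, dotProduct, Finset.mul_sum, Fintype.sum_prod_type]
        exact Finset.sum_comm

lemma cmpr_norm_le (C : Matrix (ι × κ) (ι × κ) ℂ) (η ξ : ι × κ → ℂ) :
    ‖cmpr C η ξ‖ ≤ ‖C‖ := by
  refine opNorm_le_of _ (norm_nonneg C) fun a => ?_
  set w := (cmpr C η ξ) *ᵥ a with hw
  have h1 : N2 w ^ 2 = ‖∑ k, conj (w k) * w k‖ := (self_inner w).symm
  have h2 : ‖∑ k, conj (w k) * w k‖ ≤ ‖C‖ * N2 w * N2 a := by
    rw [cmpr_inner C η ξ a w]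
    calc ‖∑ p, conj (extV η w p) * ((C *ᵥ extV ξ a) p)‖
        ≤ ‖C‖ * N2 (extV η w) * N2 (extV ξ a) := inner_mulVec_le _ _ _
      _ ≤ ‖C‖ * N2 w * N2 a := by
          have e1 := N2_extV_le η w
          have e2 := N2_extV_le ξ a
          have := mul_le_mul (mul_le_mul_of_nonneg_left e1 (norm_nonneg C)) e2
            (N2_nonneg _) (mul_nonneg (norm_nonneg C) (N2_nonneg w))
          exact this
  rcases eq_or_lt_of_le (N2_nonneg w) with h0 | h0
  · rw [← h0]
    exact mul_nonneg (norm_nonneg C) (N2_nonneg a)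
  · nlinarith [h1, h2]

lemma pattern_decomp (C : Matrix (ι × κ) (ι × κ) ℂ) (η ξ : ι × κ → ℂ) (B : Matrix κ κ ℂ) :
    ∑ p, conj (η p) * (((Matrix.of fun p q : ι × κ => B p.2 q.2) ⊙ C) *ᵥ ξ) p
      = ∑ k, conj (((colN η k : ℝ) : ℂ))
          * ((B ⊙ cmpr C η ξ) *ᵥ fun l => ((colN ξ l : ℝ) : ℂ)) k := by
  have key : ∀ k l : κ,
      ∑ i, ∑ j, conj (η (i, k)) * (B k l * C (i, k) (j, l) * ξ (j, l))
        = conj (((colN η k : ℝ) : ℂ))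
            * ((B ⊙ cmpr C η ξ) k l * ((colN ξ l : ℝ) : ℂ)) := by
    intro k l
    have hBS : ∑ i, ∑ j, conj (η (i, k)) * (B k l * C (i, k) (j, l) * ξ (j, l))
        = B k l * Smat C η ξ k l := by
      rw [Smat, Finset.mul_sum]
      refine Finset.sum_congr rfl fun i _ => ?_
      rw [Finset.mul_sum]
      refine Finset.sum_congr rfl fun j _ => ?_
      ring
    rw [hBS, Complex.conj_ofReal, Matrix.hadamard_apply]
    by_cases hv : colN η k = 0
    · rw [Smat_zero_left hv]
      have hD : cmpr C η ξ k l = 0 := by simp [cmpr, hv]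
      rw [hD, hv]
      simp
    · by_cases hu : colN ξ l = 0
      · rw [Smat_zero_right hu]
        have hD : cmpr C η ξ k l = 0 := by simp [cmpr, hu]
        rw [hD, hu]
        simp
      · have hvC : ((colN η k : ℝ) : ℂ) ≠ 0 := Complex.ofReal_ne_zero.mpr hv
        have huC : ((colN ξ l : ℝ) : ℂ) ≠ 0 := Complex.ofReal_ne_zero.mpr hu
        have hD : cmpr C η ξ k l
            = Smat C η ξ k l / (((colN η k : ℝ) : ℂ) * ((colN ξ l : ℝ) : ℂ)) := by
          simp [cmpr, hv, hu]
        rw [hD]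
        field_simp
  calc ∑ p, conj (η p) * (((Matrix.of fun p q : ι × κ => B p.2 q.2) ⊙ C) *ᵥ ξ) p
      = ∑ i, ∑ k, ∑ l, ∑ j, conj (η (i, k)) * (B k l * C (i, k) (j, l) * ξ (j, l)) := by
        rw [Fintype.sum_prod_type]
        refine Finset.sum_congr rfl fun i _ => Finset.sum_congr rfl fun k _ => ?_
        rw [Matrix.mulVec, dotProduct, Finset.mul_sum, Fintype.sum_prod_type]
        rw [Finset.sum_comm]
        refine Finset.sum_congr rfl fun l _ => Finset.sum_congr rfl fun j _ => ?_
        rw [Matrix.hadamard_apply, Matrix.of_apply]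
    _ = ∑ k, ∑ i, ∑ l, ∑ j, conj (η (i, k)) * (B k l * C (i, k) (j, l) * ξ (j, l)) :=
        Finset.sum_comm
    _ = ∑ k, ∑ l, ∑ i, ∑ j, conj (η (i, k)) * (B k l * C (i, k) (j, l) * ξ (j, l)) :=
        Finset.sum_congr rfl fun k _ => Finset.sum_comm
    _ = ∑ k, conj (((colN η k : ℝ) : ℂ))
          * ((B ⊙ cmpr C η ξ) *ᵥ fun l => ((colN ξ l : ℝ) : ℂ)) k := by
        refine Finset.sum_congr rfl fun k _ => ?_
        rw [Matrix.mulVec, dotProduct, Finset.mul_sum]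
        exact Finset.sum_congr rfl fun l _ => key k l

lemma pattern_snd_bound (B : Matrix κ κ ℂ) (C : Matrix (ι × κ) (ι × κ) ℂ) :
    ‖(Matrix.of fun p q : ι × κ => B p.2 q.2) ⊙ C‖ ≤ B.schurNorm * ‖C‖ := by
  have hK : 0 ≤ B.schurNorm * ‖C‖ := mul_nonneg (schurNorm_nonneg B) (norm_nonneg C)
  refine opNorm_le_of _ hK fun ξ => ?_
  set w := ((Matrix.of fun p q : ι × κ => B p.2 q.2) ⊙ C) *ᵥ ξ with hw
  have h1 : N2 w ^ 2 = ‖∑ p, conj (w p) * w p‖ := (self_inner w).symm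
  have h2 : ‖∑ p, conj (w p) * w p‖ ≤ B.schurNorm * ‖C‖ * (N2 w * N2 ξ) := by
    rw [hw]
    rw [pattern_decomp C w ξ B]
    calc ‖∑ k, conj (((colN w k : ℝ) : ℂ))
          * ((B ⊙ cmpr C w ξ) *ᵥ fun l => ((colN ξ l : ℝ) : ℂ)) k‖
        ≤ ‖B ⊙ cmpr C w ξ‖ * N2 (fun k => ((colN w k : ℝ) : ℂ))
            * N2 (fun l => ((colN ξ l : ℝ) : ℂ)) := inner_mulVec_le _ _ _
      _ = ‖B ⊙ cmpr C w ξ‖ * N2 w * N2 ξ := by rw [N2_colN_coe, N2_colN_coe]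
      _ ≤ B.schurNorm * ‖C‖ * (N2 w * N2 ξ) := by
          have hBD : ‖B ⊙ cmpr C w ξ‖ ≤ B.schurNorm * ‖C‖ := by
            calc ‖B ⊙ cmpr C w ξ‖ ≤ B.schurNorm * ‖cmpr C w ξ‖ := hadamard_norm_le _ _
              _ ≤ B.schurNorm * ‖C‖ :=
                  mul_le_mul_of_nonneg_left (cmpr_norm_le C w ξ) (schurNorm_nonneg B)
          calc ‖B ⊙ cmpr C w ξ‖ * N2 w * N2 ξ
              = ‖B ⊙ cmpr C w ξ‖ * (N2 w * N2 ξ) := by ring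
            _ ≤ B.schurNorm * ‖C‖ * (N2 w * N2 ξ) :=
                mul_le_mul_of_nonneg_right hBD (mul_nonneg (N2_nonneg _) (N2_nonneg _))
  rcases eq_or_lt_of_le (N2_nonneg w) with h0 | h0
  · rw [← h0]
    exact mul_nonneg hK (N2_nonneg ξ)
  · nlinarith [h1, h2]

lemma pattern_fst_bound (A : Matrix ι ι ℂ) (C : Matrix (ι × κ) (ι × κ) ℂ) :
    ‖(Matrix.of fun p q : ι × κ => A p.1 q.1) ⊙ C‖ ≤ A.schurNorm * ‖C‖ := by
  set e : ι × κ ≃ κ × ι := Equiv.prodComm ι κ with he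
  have hM : (Matrix.of fun p q : ι × κ => A p.1 q.1)
      = (Matrix.of fun p q : κ × ι => A p.2 q.2).submatrix ⇑e ⇑e := by
    ext ⟨i, k⟩ ⟨j, l⟩
    rfl
  have hC : (C.submatrix ⇑e.symm ⇑e.symm).submatrix ⇑e ⇑e = C := by
    ext p q
    simp [Matrix.submatrix_apply]
  have hHad : (Matrix.of fun p q : ι × κ => A p.1 q.1) ⊙ C
      = ((Matrix.of fun p q : κ × ι => A p.2 q.2) ⊙ (C.submatrix ⇑e.symm ⇑e.symm)).submatrix
          ⇑e ⇑e := by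
    rw [hM, ← hadamard_submatrix, hC]
  rw [hHad, opNorm_submatrix]
  calc ‖(Matrix.of fun p q : κ × ι => A p.2 q.2) ⊙ (C.submatrix ⇑e.symm ⇑e.symm)‖
      ≤ A.schurNorm * ‖C.submatrix ⇑e.symm ⇑e.symm‖ := pattern_snd_bound A _
    _ = A.schurNorm * ‖C‖ := by rw [opNorm_submatrix]

lemma schur_kron [Nonempty ι] [Nonempty κ] (A : Matrix ι ι ℂ) (B : Matrix κ κ ℂ) :
    (A ⊗ₖ B).schurNorm = A.schurNorm * B.schurNorm := by
  have hsA := schurNorm_nonneg A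
  have hsB := schurNorm_nonneg B
  refine le_antisymm ?_ ?_
  · refine schurNorm_le _ (mul_nonneg hsA hsB) fun C hC => ?_
    have hsplit : (A ⊗ₖ B) ⊙ C
        = (Matrix.of fun p q : ι × κ => A p.1 q.1)
            ⊙ ((Matrix.of fun p q : ι × κ => B p.2 q.2) ⊙ C) := by
      ext ⟨i, k⟩ ⟨j, l⟩
      simp only [Matrix.hadamard_apply, Matrix.kroneckerMap_apply, Matrix.of_apply]
      ring
    rw [hsplit]
    calc ‖(Matrix.of fun p q : ι × κ => A p.1 q.1)
            ⊙ ((Matrix.of fun p q : ι × κ => B p.2 q.2) ⊙ C)‖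
        ≤ A.schurNorm * ‖(Matrix.of fun p q : ι × κ => B p.2 q.2) ⊙ C‖ :=
          pattern_fst_bound _ _
      _ ≤ A.schurNorm * (B.schurNorm * ‖C‖) :=
          mul_le_mul_of_nonneg_left (pattern_snd_bound _ _) hsA
      _ ≤ A.schurNorm * (B.schurNorm * 1) := by
          refine mul_le_mul_of_nonneg_left ?_ hsA
          exact mul_le_mul_of_nonneg_left hC hsB
      _ = A.schurNorm * B.schurNorm := by rw [mul_one]
  · set S := (A ⊗ₖ B).schurNorm with hSdef
    have hS : 0 ≤ S := schurNorm_nonneg _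
    have key : ∀ CA : Matrix ι ι ℂ, ‖CA‖ ≤ 1 → ∀ CB : Matrix κ κ ℂ, ‖CB‖ ≤ 1 →
        ‖A ⊙ CA‖ * ‖B ⊙ CB‖ ≤ S := by
      intro CA hCA CB hCB
      have h1 : ‖CA ⊗ₖ CB‖ ≤ 1 := by
        calc ‖CA ⊗ₖ CB‖ ≤ ‖CA‖ * ‖CB‖ := kron_norm_le _ _
          _ ≤ 1 := mul_le_one₀ hCA (norm_nonneg _) hCB
      have h2 : (A ⊗ₖ B) ⊙ (CA ⊗ₖ CB) = (A ⊙ CA) ⊗ₖ (B ⊙ CB) := by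
        ext ⟨i, k⟩ ⟨j, l⟩
        simp only [Matrix.hadamard_apply, Matrix.kroneckerMap_apply]
        ring
      have h3 := le_schurNorm (A ⊗ₖ B) _ h1
      rw [h2, kron_norm_eq] at h3
      exact h3
    have step1 : ∀ CB : Matrix κ κ ℂ, ‖CB‖ ≤ 1 → A.schurNorm * ‖B ⊙ CB‖ ≤ S := by
      intro CB hCB
      rcases eq_or_lt_of_le (norm_nonneg (B ⊙ CB)) with h0 | h0
      · rw [← h0, mul_zero]; exact hS
      · have hA : A.schurNorm ≤ S / ‖B ⊙ CB‖ :=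
          schurNorm_le A (div_nonneg hS (norm_nonneg _)) fun CA hCA =>
            (le_div_iff₀ h0).mpr (key CA hCA CB hCB)
        calc A.schurNorm * ‖B ⊙ CB‖ ≤ (S / ‖B ⊙ CB‖) * ‖B ⊙ CB‖ :=
              mul_le_mul_of_nonneg_right hA h0.le
          _ = S := div_mul_cancel₀ S (ne_of_gt h0)
    rcases eq_or_lt_of_le hsA with h0 | h0
    · rw [← h0, zero_mul]; exact hS
    · have hB : B.schurNorm ≤ S / A.schurNorm :=
        schurNorm_le B (div_nonneg hS hsA) fun CB hCB => by
          rw [le_div_iff₀' h0]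
          exact step1 CB hCB
      calc A.schurNorm * B.schurNorm ≤ A.schurNorm * (S / A.schurNorm) :=
            mul_le_mul_of_nonneg_left hB hsA
        _ = S := by
            field_simp

end SchurAux

/-- For sign matrices `A` (`n × n`) and `B` (`m × m`) there is an `nm × nm` sign matrix `C`
with `‖C‖_S = ‖A‖_S * ‖B‖_S`; i.e. `σ_n σ_m ⊆ σ_{nm}`. -/
theorem schur_spectrum_mul (n m : ℕ) (hn : 0 < n) (hm : 0 < m)
    (A : Matrix (Fin n) (Fin n) ℝ) (hA : ∀ i j, A i j = 1 ∨ A i j = -1)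
    (B : Matrix (Fin m) (Fin m) ℝ) (hB : ∀ i j, B i j = 1 ∨ B i j = -1) :
    ∃ C : Matrix (Fin (n * m)) (Fin (n * m)) ℝ, (∀ i j, C i j = 1 ∨ C i j = -1) ∧
      Matrix.schurNorm (C.map Complex.ofReal) =
        Matrix.schurNorm (A.map Complex.ofReal) * Matrix.schurNorm (B.map Complex.ofReal) := by
  have hNι : Nonempty (Fin n) := ⟨⟨0, hn⟩⟩
  have hNκ : Nonempty (Fin m) := ⟨⟨0, hm⟩⟩
  set e : Fin n × Fin m ≃ Fin (n * m) := finProdFinEquiv with he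
  refine ⟨(Matrix.kroneckerMap (· * ·) A B).submatrix ⇑e.symm ⇑e.symm, ?_, ?_⟩
  · intro i j
    rcases hA (e.symm i).1 (e.symm j).1 with h1 | h1 <;>
      rcases hB (e.symm i).2 (e.symm j).2 with h2 | h2 <;>
      · simp only [Matrix.submatrix_apply, Matrix.kroneckerMap_apply, h1, h2]
        norm_num
  · have hmap : ((Matrix.kroneckerMap (· * ·) A B).submatrix ⇑e.symm ⇑e.symm).map Complex.ofReal
        = (Matrix.kroneckerMap (· * ·) (A.map Complex.ofReal)
            (B.map Complex.ofReal)).submatrix ⇑e.symm ⇑e.symm := by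
      ext i j
      simp [Matrix.map_apply, Matrix.submatrix_apply, Matrix.kroneckerMap_apply]
    rw [hmap, SchurAux.schurNorm_submatrix _ e.symm, SchurAux.schur_kron]
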